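/- For all a, b, c, d in the symmetrized tropical semiring 𝕊, if a < b and c < d, then a ⊕ c < b ⊕ d. -/
import Mathlib


/-!  Signed tropical numbers 𝕋±, the symmetrized tropical semiring 𝕊,
     and signed tropical convexity (Loho–Végh). -/

inductive SSign : Type where
  | pos : SSign
  | neg : SSign
  | bal : SSign
deriving DecidableEq

/-- The symmetrized tropical semiring 𝕊: the tropical zero 𝟘 = -∞ together with
elements `elem s r` where `s` is a sign (⊕, ⊖ or •) and `r` a real number. -/
inductive STrop : Type where
  | zero : STrop
  | elem : SSign → ℝ → STrop

namespace STrop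

/-- membership in the signed tropical numbers 𝕋± (i.e. not balanced-nonzero). -/
def isSigned : STrop → Prop
  | elem SSign.bal _ => False
  | _ => True

/-- membership in 𝕋≥, the nonnegative tropical numbers. -/
def nneg : STrop → Prop
  | zero => True
  | elem SSign.pos _ => True
  | _ => False

/-- membership in 𝕋≤, the nonpositive tropical numbers. -/
def npos : STrop → Prop
  | zero => True
  | elem SSign.neg _ => True
  | _ => False

/-- strictly positive signed element (sign ⊕, not 𝟘). -/
def isPos : STrop → Prop
  | elem SSign.pos _ => True
  | _ => False

/-- balanced or 𝟘 (membership in 𝕋•). -/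
def balZero : STrop → Prop
  | zero => True
  | elem SSign.bal _ => True
  | _ => False

/-- the negation map ⊖. -/
def neg : STrop → STrop
  | zero => zero
  | elem SSign.pos r => elem SSign.neg r
  | elem SSign.neg r => elem SSign.pos r
  | elem SSign.bal r => elem SSign.bal r

/-- tropical addition ⊕ on 𝕊. -/
noncomputable def add : STrop → STrop → STrop
  | zero, y => y
  | x, zero => x
  | elem s r, elem t u =>
    if r < u then elem t u
    else if u < r then elem s r
    else if s = t then elem s r
    else elem SSign.bal r

def signMul : SSign → SSign → SSign
  | SSign.pos, t => t
  | SSign.neg, SSign.pos => SSign.neg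
  | SSign.neg, SSign.neg => SSign.pos
  | SSign.neg, SSign.bal => SSign.bal
  | SSign.bal, _ => SSign.bal

/-- tropical multiplication ⊙ on 𝕊. -/
def mul : STrop → STrop → STrop
  | zero, _ => zero
  | _, zero => zero
  | elem s r, elem t u => elem (signMul s t) (r + u)

/-- a ⊖ b := a ⊕ (⊖b). -/
noncomputable def sub (x y : STrop) : STrop := add x (neg y)

/-- the tropical one, the signed element ⊕0. -/
def one : STrop := elem SSign.pos 0

/-- the absolute value |·| : 𝕊 → 𝕋≥. -/
def absS : STrop → STrop
  | zero => zero
  | elem _ r => elem SSign.pos r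

/-- strict order: x > y iff x ⊖ y is a strictly positive signed element. -/
def sgt (x y : STrop) : Prop := isPos (sub x y)

/-- balance relation: x ⋈ y iff x ⊖ y is balanced or 𝟘. -/
def bal (x y : STrop) : Prop := balZero (sub x y)

/-- the relation ⊵ : x ⊵ y iff x > y or x ⋈ y. -/
def teq (x y : STrop) : Prop := sgt x y ∨ bal x y

/-- the total order ≤ on the signed tropical numbers 𝕋±
(arbitrarily `False` whenever a balanced element is involved). -/
def sle : STrop → STrop → Prop
  | zero, zero => True
  | zero, elem SSign.pos _ => True
  | elem SSign.neg _, zero => True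
  | elem SSign.neg _, elem SSign.pos _ => True
  | elem SSign.pos r, elem SSign.pos u => r ≤ u
  | elem SSign.neg r, elem SSign.neg u => u ≤ r
  | _, _ => False

/-- U(a): the set of signed numbers incomparable with a; the singleton {a}
for signed a, and the order interval [⊖|a|, |a|] for balanced a. -/
def U : STrop → Set STrop
  | elem SSign.bal r => {x | isSigned x ∧ sle (elem SSign.neg r) x ∧ sle x (elem SSign.pos r)}
  | a => {a}

/-- tropical sum of finitely many elements of 𝕊. -/
noncomputable def sumFin : ∀ {n : ℕ}, (Fin n → STrop) → STrop
  | 0, _ => zero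
  | _ + 1, f => add (f 0) (sumFin fun i => f i.succ)

/-- matrix–vector product A ⊙ x over 𝕊. -/
noncomputable def mv {d n : ℕ} (A : Fin d → Fin n → STrop) (x : Fin n → STrop) : Fin d → STrop :=
  fun i => sumFin fun j => mul (A i j) (x j)

/-- vectors in 𝕋±^d. -/
def isSignedVec {d : ℕ} (v : Fin d → STrop) : Prop := ∀ i, isSigned (v i)

/-- the signed tropical convex hull of the columns of a matrix A:
tconv(A) = {z ∈ 𝕋±^d : z ⋈ A⊙x for some x ∈ 𝕋≥^n with ⊕_j x_j = 0}. -/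
def tconv {d n : ℕ} (A : Fin d → Fin n → STrop) : Set (Fin d → STrop) :=
  {z | isSignedVec z ∧ ∃ x : Fin n → STrop,
    (∀ j, nneg (x j)) ∧ sumFin x = one ∧ ∀ i, bal (z i) (mv A x i)}

/-- the signed tropical convex hull of an arbitrary set: the union of the hulls
of all finite collections of points of M. -/
def tconvSet {d : ℕ} (M : Set (Fin d → STrop)) : Set (Fin d → STrop) :=
  ⋃ (n : ℕ) (A : Fin d → Fin n → STrop) (_ : ∀ j, (fun i => A i j) ∈ M), tconv A

/-- a set M ⊆ 𝕋±^d is tropically convex iff M = tconv(M). -/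
def TropConvex {d : ℕ} (M : Set (Fin d → STrop)) : Prop := M = tconvSet M

/-- evaluation a ⊙ (0, x₁, …, x_d)ᵀ of an affine functional. -/
noncomputable def affEval {d : ℕ} (a : Fin (d + 1) → STrop) (x : Fin d → STrop) : STrop :=
  sumFin fun j => mul (a j) ((Fin.cons one x : Fin (d + 1) → STrop) j)

/-- the open signed tropical halfspace H⁺(a) = {x ∈ 𝕋±^d : a⊙(0,x)ᵀ > 𝟘}. -/
def Hopen {d : ℕ} (a : Fin (d + 1) → STrop) : Set (Fin d → STrop) :=
  {x | isSignedVec x ∧ sgt (affEval a x) zero}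

/-- the closed signed tropical halfspace H̄⁺(a) = {x ∈ 𝕋±^d : a⊙(0,x)ᵀ ⊵ 𝟘}. -/
def Hclosed {d : ℕ} (a : Fin (d + 1) → STrop) : Set (Fin d → STrop) :=
  {x | isSignedVec x ∧ teq (affEval a x) zero}

/-- the non-negative kernel nnker(A). -/
def nnker {d n : ℕ} (A : Fin d → Fin n → STrop) : Set (Fin n → STrop) :=
  {x | (∀ j, nneg (x j)) ∧ x ≠ (fun _ => zero) ∧ ∀ i, balZero (mv A x i)}

/-- the open tropical cone sep(A) = {y ∈ 𝕋±^d : yᵀ⊙A > 𝟘 componentwise}. -/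
def sep {d : ℕ} {J : Type} (A : Fin d → J → STrop) : Set (Fin d → STrop) :=
  {y | isSignedVec y ∧ ∀ j, isPos (sumFin fun i => mul (y i) (A i j))}

end STrop

namespace AddStrictAux

noncomputable def P : STrop → WithBot ℝ
  | STrop.zero => ⊥
  | STrop.elem SSign.pos r => (r : WithBot ℝ)
  | STrop.elem SSign.neg _ => ⊥
  | STrop.elem SSign.bal r => (r : WithBot ℝ)

noncomputable def N : STrop → WithBot ℝ
  | STrop.zero => ⊥
  | STrop.elem SSign.pos _ => ⊥
  | STrop.elem SSign.neg r => (r : WithBot ℝ)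
  | STrop.elem SSign.bal r => (r : WithBot ℝ)

lemma P_neg (x : STrop) : P (STrop.neg x) = N x := by
  rcases x with _ | ⟨(_|_|_), r⟩ <;> rfl

lemma N_neg (x : STrop) : N (STrop.neg x) = P x := by
  rcases x with _ | ⟨(_|_|_), r⟩ <;> rfl

lemma isPos_iff (x : STrop) : STrop.isPos x ↔ N x < P x := by
  rcases x with _ | ⟨(_|_|_), r⟩ <;> simp [STrop.isPos, P, N]

lemma sgt_iff (x y : STrop) :
    STrop.sgt x y ↔ max (N (STrop.add x (STrop.neg y))) (⊥ : WithBot ℝ) <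
      max (P (STrop.add x (STrop.neg y))) (⊥ : WithBot ℝ) := by
  rw [STrop.sgt, STrop.sub, isPos_iff]; simp

lemma P_add_le (x y : STrop) : P (STrop.add x y) ≤ max (P x) (P y) := by
  rcases x with _ | ⟨sx, r⟩ <;> rcases y with _ | ⟨sy, u⟩
  · simp [STrop.add, P]
  · simp [STrop.add, P]
  · simp [STrop.add, P]
  · rcases lt_trichotomy r u with h | h | h
    · have h' : ¬ u < r := not_lt.mpr h.le
      cases sx <;> cases sy <;> simp [STrop.add, P, h, h', le_max_iff, le_refl]
    · subst h
      cases sx <;> cases sy <;> simp [STrop.add, P, le_max_iff, le_refl]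
    · have h' : ¬ r < u := not_lt.mpr h.le
      cases sx <;> cases sy <;> simp [STrop.add, P, h, h', le_max_iff, le_refl]

lemma N_add_le (x y : STrop) : N (STrop.add x y) ≤ max (N x) (N y) := by
  rcases x with _ | ⟨sx, r⟩ <;> rcases y with _ | ⟨sy, u⟩
  · simp [STrop.add, N]
  · simp [STrop.add, N]
  · simp [STrop.add, N]
  · rcases lt_trichotomy r u with h | h | h
    · have h' : ¬ u < r := not_lt.mpr h.le
      cases sx <;> cases sy <;> simp [STrop.add, N, h, h', le_max_iff, le_refl]
    · subst h
      cases sx <;> cases sy <;> simp [STrop.add, N, le_max_iff, le_refl]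
    · have h' : ¬ r < u := not_lt.mpr h.le
      cases sx <;> cases sy <;> simp [STrop.add, N, h, h', le_max_iff, le_refl]

lemma P_add_eq_or (x y : STrop) : P (STrop.add x y) = max (P x) (P y) ∨ max (P x) (P y) < max (N x) (N y) := by
  rcases x with _ | ⟨sx, r⟩ <;> rcases y with _ | ⟨sy, u⟩
  · left; simp [STrop.add, P, N]
  · left; simp [STrop.add, P, N]
  · left; simp [STrop.add, P, N]
  · rcases lt_trichotomy r u with h | h | h
    · have h' : ¬ u < r := not_lt.mpr h.le
      have hc : (r : WithBot ℝ) < u := by exact_mod_cast h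
      cases sx <;> cases sy <;>
        simp [STrop.add, P, N, h, h', hc, hc.le, max_eq_right, max_eq_left,
          lt_max_iff, max_lt_iff, le_max_iff, le_refl]
    · subst h
      cases sx <;> cases sy <;> simp [STrop.add, P, N, le_max_iff, le_refl]
    · have h' : ¬ r < u := not_lt.mpr h.le
      have hc : (u : WithBot ℝ) < r := by exact_mod_cast h
      cases sx <;> cases sy <;>
        simp [STrop.add, P, N, h, h', hc, hc.le, max_eq_right, max_eq_left,
          lt_max_iff, max_lt_iff, le_max_iff, le_refl]

lemma N_add_eq_or (x y : STrop) : N (STrop.add x y) = max (N x) (N y) ∨ max (N x) (N y) < max (P x) (P y) := by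
  rcases x with _ | ⟨sx, r⟩ <;> rcases y with _ | ⟨sy, u⟩
  · left; simp [STrop.add, P, N]
  · left; simp [STrop.add, P, N]
  · left; simp [STrop.add, P, N]
  · rcases lt_trichotomy r u with h | h | h
    · have h' : ¬ u < r := not_lt.mpr h.le
      have hc : (r : WithBot ℝ) < u := by exact_mod_cast h
      cases sx <;> cases sy <;>
        simp [STrop.add, P, N, h, h', hc, hc.le, max_eq_right, max_eq_left,
          lt_max_iff, max_lt_iff, le_max_iff, le_refl]
    · subst h
      cases sx <;> cases sy <;> simp [STrop.add, P, N, le_max_iff, le_refl]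
    · have h' : ¬ r < u := not_lt.mpr h.le
      have hc : (u : WithBot ℝ) < r := by exact_mod_cast h
      cases sx <;> cases sy <;>
        simp [STrop.add, P, N, h, h', hc, hc.le, max_eq_right, max_eq_left,
          lt_max_iff, max_lt_iff, le_max_iff, le_refl]

/-- the key order-theoretic lemma, in any linear order with the data abstracted. -/
lemma key {α : Type*} [LinearOrder α]
    (pa na pb nb pc nc pd nd pac nac pbd nbd : α)
    (h1 : max nb pa < max pb na) (h2 : max nd pc < max pd nc)
    (hn : nbd ≤ max nb nd) (hp : pac ≤ max pa pc)
    (hb : pbd = max pb pd ∨ max pb pd < max nb nd)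
    (hc : nac = max na nc ∨ max na nc < max pa pc) :
    max nbd pac < max pbd nac := by
  have hnb : nb < max pb na := (le_max_left nb pa).trans_lt h1
  have hpa : pa < max pb na := (le_max_right nb pa).trans_lt h1
  have hnd : nd < max pd nc := (le_max_left nd pc).trans_lt h2
  have hpc : pc < max pd nc := (le_max_right nd pc).trans_lt h2
  rcases hb with hb | hb <;> rcases hc with hc | hc
  · -- both sums keep their parts
    subst hb; subst hc
    have hR1 : max pb na ≤ max (max pb pd) (max na nc) :=
      max_le (le_max_of_le_left (le_max_left _ _)) (le_max_of_le_right (le_max_left _ _))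
    have hR2 : max pd nc ≤ max (max pb pd) (max na nc) :=
      max_le (le_max_of_le_left (le_max_right _ _)) (le_max_of_le_right (le_max_right _ _))
    exact max_lt
      (hn.trans_lt (max_lt (hnb.trans_le hR1) (hnd.trans_le hR2)))
      (hp.trans_lt (max_lt (hpa.trans_le hR1) (hpc.trans_le hR2)))
  · -- positive side dominates a ⊕ c
    subst hb
    have hR1 : max pb na ≤ max (max pb pd) (max na nc) :=
      max_le (le_max_of_le_left (le_max_left _ _)) (le_max_of_le_right (le_max_left _ _))
    have hR2 : max pd nc ≤ max (max pb pd) (max na nc) :=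
      max_le (le_max_of_le_left (le_max_right _ _)) (le_max_of_le_right (le_max_right _ _))
    have h4 : max pa pc < max (max pb pd) (max na nc) :=
      max_lt (hpa.trans_le hR1) (hpc.trans_le hR2)
    have h6 : max na nc < max pb pd := by
      rcases le_or_gt (max pb pd) (max na nc) with h | h
      · have := hc.trans h4
        rw [max_eq_right h] at this
        exact absurd this (lt_irrefl _)
      · exact h
    have hA : max pb na ≤ max pb pd :=
      max_le (le_max_left _ _) ((le_max_left na nc).trans h6.le)
    have hB : max pd nc ≤ max pb pd :=
      max_le (le_max_right _ _) ((le_max_right na nc).trans h6.le)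
    exact lt_of_lt_of_le
      (max_lt (hn.trans_lt (max_lt (hnb.trans_le hA) (hnd.trans_le hB)))
        (hp.trans_lt (max_lt (hpa.trans_le hA) (hpc.trans_le hB))))
      (le_max_left _ _)
  · -- negative side dominates b ⊕ d
    subst hc
    have hR1 : max pb na ≤ max (max pb pd) (max na nc) :=
      max_le (le_max_of_le_left (le_max_left _ _)) (le_max_of_le_right (le_max_left _ _))
    have hR2 : max pd nc ≤ max (max pb pd) (max na nc) :=
      max_le (le_max_of_le_left (le_max_right _ _)) (le_max_of_le_right (le_max_right _ _))
    have h4 : max nb nd < max (max pb pd) (max na nc) :=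
      max_lt (hnb.trans_le hR1) (hnd.trans_le hR2)
    have h6 : max pb pd < max na nc := by
      rcases le_or_gt (max na nc) (max pb pd) with h | h
      · have := hb.trans h4
        rw [max_eq_left h] at this
        exact absurd this (lt_irrefl _)
      · exact h
    have hA : max pb na ≤ max na nc :=
      max_le (((le_max_left pb pd).trans h6.le)) (le_max_left _ _)
    have hB : max pd nc ≤ max na nc :=
      max_le (((le_max_right pb pd).trans h6.le)) (le_max_right _ _)
    exact lt_of_lt_of_le
      (max_lt (hn.trans_lt (max_lt (hnb.trans_le hA) (hnd.trans_le hB)))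
        (hp.trans_lt (max_lt (hpa.trans_le hA) (hpc.trans_le hB))))
      (le_max_right _ _)
  · -- both dominated: impossible
    exfalso
    have hM1 : max nb nd < max (max pb na) (max pd nc) :=
      max_lt (hnb.trans_le (le_max_left _ _)) (hnd.trans_le (le_max_right _ _))
    have hM2 : max pa pc < max (max pb na) (max pd nc) :=
      max_lt (hpa.trans_le (le_max_left _ _)) (hpc.trans_le (le_max_right _ _))
    have h7 : max (max pb na) (max pd nc) ≤ max (max pb pd) (max na nc) :=
      max_le
        (max_le (le_max_of_le_left (le_max_left _ _)) (le_max_of_le_right (le_max_left _ _)))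
        (max_le (le_max_of_le_left (le_max_right _ _)) (le_max_of_le_right (le_max_right _ _)))
    have h8 : max (max pb pd) (max na nc) < max (max pb na) (max pd nc) :=
      max_lt (hb.trans hM1) (hc.trans hM2)
    exact absurd (h7.trans_lt h8) (lt_irrefl _)

lemma sgt_iff' (x y : STrop) :
    STrop.sgt x y ↔ max (N x) (P y) < max (P x) (N y) := by
  rw [STrop.sgt, STrop.sub, isPos_iff]
  rcases x with _ | ⟨sx, r⟩ <;> rcases y with _ | ⟨sy, u⟩
  · simp [STrop.add, STrop.neg, P, N]
  · cases sy <;> simp [STrop.add, STrop.neg, P, N]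
  · cases sx <;> simp [STrop.add, STrop.neg, P, N]
  · rcases lt_trichotomy r u with h | h | h
    · have h' : ¬ u < r := not_lt.mpr h.le
      have hc : (r : WithBot ℝ) < u := by exact_mod_cast h
      cases sx <;> cases sy <;>
        simp [STrop.add, STrop.neg, P, N, h, h', hc, hc.le, max_eq_right, max_eq_left,
          lt_max_iff, max_lt_iff, le_max_iff, le_refl, lt_irrefl, WithBot.coe_lt_coe,
          WithBot.bot_lt_coe, not_lt_of_gt h]
    · subst h
      cases sx <;> cases sy <;>
        simp [STrop.add, STrop.neg, P, N, lt_max_iff, max_lt_iff, le_max_iff, le_refl,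
          lt_irrefl, WithBot.bot_lt_coe]
    · have h' : ¬ r < u := not_lt.mpr h.le
      have hc : (u : WithBot ℝ) < r := by exact_mod_cast h
      cases sx <;> cases sy <;>
        simp [STrop.add, STrop.neg, P, N, h, h', hc, hc.le, max_eq_right, max_eq_left,
          lt_max_iff, max_lt_iff, le_max_iff, le_refl, lt_irrefl, WithBot.coe_lt_coe,
          WithBot.bot_lt_coe, not_lt_of_gt h]

end AddStrictAux

/-- if a < b and c < d in 𝕊, then a ⊕ c < b ⊕ d. -/
theorem adding_strict_inequalities (a b c d : STrop)
    (h1 : STrop.sgt b a) (h2 : STrop.sgt d c) :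
    STrop.sgt (STrop.add b d) (STrop.add a c) := by
  rw [AddStrictAux.sgt_iff'] at h1 h2 ⊢
  exact AddStrictAux.key (AddStrictAux.P a) (AddStrictAux.N a) (AddStrictAux.P b)
    (AddStrictAux.N b) (AddStrictAux.P c) (AddStrictAux.N c) (AddStrictAux.P d)
    (AddStrictAux.N d) _ _ _ _ h1 h2
    (AddStrictAux.N_add_le b d) (AddStrictAux.P_add_le a c)
    (AddStrictAux.P_add_eq_or b d) (AddStrictAux.N_add_eq_or a c)
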